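/- Let d ≥ 1 and R > 0. Let η : ℝ → ℝ satisfy 0 ≤ η ≤ 1, |η(z₁) − η(z₂)| ≤ 2|z₁ − z₂| for all z₁, z₂, η(z) = 1 for z ≤ R, and η(z) = 0 for z ≥ R + 1. Let f : P₁(ℝ^d) → ℝ^d satisfy: (a) there is M_f ≥ 0 with ‖f(μ)‖ ≤ M_f(1 + m₁(μ)) for all μ ∈ P₁(ℝ^d); (b) there is L > 0 such that for all μ₁, μ₂ ∈ P₁(ℝ^d) with m₁(μ₁) ≤ R+1 and m₁(μ₂) ≤ R+1 and every coupling γ of μ₁ and μ₂, ‖f(μ₁) − f(μ₂)‖ ≤ L ∫ ‖x − y‖ dγ(x,y). Define the truncated field ṽ_μ(x,λ) = −x + λ·η(m₁(μ))·f(μ) + (1−λ)·η(m₁(μ))·e(μ). Then there exists a constant L_R ≥ 0 such that for all μ₁, μ₂ ∈ P₁(ℝ^d), all x₁, x₂ ∈ ℝ^d, all λ₁, λ₂ ∈ [0,1], and every coupling γ of μ₁ and μ₂, one has ‖ṽ_{μ₁}(x₁,λ₁) − ṽ_{μ₂}(x₂,λ₂)‖ ≤ L_R (‖x₁ − x₂‖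 + |λ₁ − λ₂| + ∫ ‖x − y‖ dγ(x,y)). -/
import Mathlib


open MeasureTheory

/-- First moment `m₁(μ) = ∫ ‖x‖ dμ`. -/
noncomputable def m1 {d : ℕ} (μ : Measure (EuclideanSpace ℝ (Fin d))) : ℝ :=
  ∫ x, ‖x‖ ∂μ

/-- Mean `e(μ) = ∫ x dμ` (Bochner integral). -/
noncomputable def meanM {d : ℕ} (μ : Measure (EuclideanSpace ℝ (Fin d))) :
    EuclideanSpace ℝ (Fin d) :=
  ∫ x, x ∂μ

set_option maxHeartbeats 2000000 in
/-- Lipschitz continuity of the truncated CBO velocity field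
`ṽ_μ(x,λ) = -x + λ η(m₁(μ)) f(μ) + (1-λ) η(m₁(μ)) e(μ)` in `(x, λ, μ)`,
where the distance on measures is expressed through couplings. -/
theorem stmt_3 (d : ℕ) (hd : 1 ≤ d) (R : ℝ) (hR : 0 < R)
    (η : ℝ → ℝ) (hη01 : ∀ z, η z ∈ Set.Icc (0 : ℝ) 1)
    (hηlip : ∀ z₁ z₂ : ℝ, |η z₁ - η z₂| ≤ 2 * |z₁ - z₂|)
    (hη1 : ∀ z : ℝ, z ≤ R → η z = 1)
    (hη0 : ∀ z : ℝ, R + 1 ≤ z → η z = 0)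
    (f : Measure (EuclideanSpace ℝ (Fin d)) → EuclideanSpace ℝ (Fin d))
    (Mf : ℝ) (hMf : 0 ≤ Mf)
    (hfg : ∀ μ : Measure (EuclideanSpace ℝ (Fin d)), IsProbabilityMeasure μ →
      Integrable (fun x : EuclideanSpace ℝ (Fin d) => x) μ →
      ‖f μ‖ ≤ Mf * (1 + m1 μ))
    (L : ℝ) (hL : 0 < L)
    (hfl : ∀ (μ₁ μ₂ : Measure (EuclideanSpace ℝ (Fin d)))
      (π : Measure (EuclideanSpace ℝ (Fin d) × EuclideanSpace ℝ (Fin d))),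
      IsProbabilityMeasure μ₁ → IsProbabilityMeasure μ₂ →
      Integrable (fun x : EuclideanSpace ℝ (Fin d) => x) μ₁ →
      Integrable (fun x : EuclideanSpace ℝ (Fin d) => x) μ₂ →
      m1 μ₁ ≤ R + 1 → m1 μ₂ ≤ R + 1 →
      IsProbabilityMeasure π → π.map Prod.fst = μ₁ → π.map Prod.snd = μ₂ →
      ‖f μ₁ - f μ₂‖ ≤ L * ∫ p, ‖p.1 - p.2‖ ∂π) :
    ∃ LR : ℝ, 0 ≤ LR ∧
      ∀ (μ₁ μ₂ : Measure (EuclideanSpace ℝ (Fin d)))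
        (π : Measure (EuclideanSpace ℝ (Fin d) × EuclideanSpace ℝ (Fin d)))
        (x₁ x₂ : EuclideanSpace ℝ (Fin d)) (l₁ l₂ : ℝ),
        IsProbabilityMeasure μ₁ → IsProbabilityMeasure μ₂ →
        Integrable (fun x : EuclideanSpace ℝ (Fin d) => x) μ₁ →
        Integrable (fun x : EuclideanSpace ℝ (Fin d) => x) μ₂ →
        l₁ ∈ Set.Icc (0 : ℝ) 1 → l₂ ∈ Set.Icc (0 : ℝ) 1 →
        IsProbabilityMeasure π → π.map Prod.fst = μ₁ → π.map Prod.snd = μ₂ →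
        ‖(-x₁ + (l₁ * η (m1 μ₁)) • f μ₁ + ((1 - l₁) * η (m1 μ₁)) • meanM μ₁)
            - (-x₂ + (l₂ * η (m1 μ₂)) • f μ₂ + ((1 - l₂) * η (m1 μ₂)) • meanM μ₂)‖
          ≤ LR * (‖x₁ - x₂‖ + |l₁ - l₂| + ∫ p, ‖p.1 - p.2‖ ∂π) := by
  set M : ℝ := Mf * (R + 2) with hMdef
  have hM0 : 0 ≤ M := by positivity
  refine ⟨2 + L + 3 * M + 3 * (R + 1), by positivity, ?_⟩
  intro μ₁ μ₂ π x₁ x₂ l₁ l₂ hp₁ hp₂ hi₁ hi₂ hl₁ hl₂ hpπ hmap1 hmap2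
  -- integrability of the coordinates under the coupling
  have hint1 : Integrable (fun p : EuclideanSpace ℝ (Fin d) × EuclideanSpace ℝ (Fin d) => p.1) π := by
    have h := hi₁; rw [← hmap1] at h
    exact (integrable_map_measure h.aestronglyMeasurable measurable_fst.aemeasurable).mp h
  have hint2 : Integrable (fun p : EuclideanSpace ℝ (Fin d) × EuclideanSpace ℝ (Fin d) => p.2) π := by
    have h := hi₂; rw [← hmap2] at h
    exact (integrable_map_measure h.aestronglyMeasurable measurable_snd.aemeasurable).mp h
  have hE1 : meanM μ₁ = ∫ p, p.1 ∂π := by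
    rw [meanM, ← hmap1]
    exact integral_map measurable_fst.aemeasurable aestronglyMeasurable_id
  have hE2 : meanM μ₂ = ∫ p, p.2 ∂π := by
    rw [meanM, ← hmap2]
    exact integral_map measurable_snd.aemeasurable aestronglyMeasurable_id
  have hm1e : m1 μ₁ = ∫ p, ‖p.1‖ ∂π := by
    rw [m1, ← hmap1]
    exact integral_map measurable_fst.aemeasurable measurable_norm.aestronglyMeasurable
  have hm2e : m1 μ₂ = ∫ p, ‖p.2‖ ∂π := by
    rw [m1, ← hmap2]
    exact integral_map measurable_snd.aemeasurable measurable_norm.aestronglyMeasurable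
  set W : ℝ := ∫ p, ‖p.1 - p.2‖ ∂π with hWdef
  have hW0 : 0 ≤ W := integral_nonneg fun p => norm_nonneg _
  have hWint : Integrable (fun p : EuclideanSpace ℝ (Fin d) × EuclideanSpace ℝ (Fin d) => ‖p.1 - p.2‖) π :=
    (hint1.sub hint2).norm
  have hm1diff : |m1 μ₁ - m1 μ₂| ≤ W := by
    rw [hm1e, hm2e, ← integral_sub hint1.norm hint2.norm, ← Real.norm_eq_abs]
    refine le_trans (norm_integral_le_integral_norm _) ?_
    refine integral_mono (hint1.norm.sub hint2.norm).norm hWint fun p => ?_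
    simpa [Real.norm_eq_abs] using abs_norm_sub_norm_le p.1 p.2
  have hEdiff : ‖meanM μ₁ - meanM μ₂‖ ≤ W := by
    rw [hE1, hE2, ← integral_sub hint1 hint2]
    exact norm_integral_le_integral_norm _
  -- notation
  set h₁ : ℝ := η (m1 μ₁) with hh1def
  set h₂ : ℝ := η (m1 μ₂) with hh2def
  have hh1 := hη01 (m1 μ₁)
  have hh2 := hη01 (m1 μ₂)
  have hhd : |h₁ - h₂| ≤ 2 * W := le_trans (hηlip _ _) (by linarith [hm1diff])
  have hm1n : 0 ≤ m1 μ₁ := integral_nonneg fun x => norm_nonneg _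
  have hm2n : 0 ≤ m1 μ₂ := integral_nonneg fun x => norm_nonneg _
  have hEn1 : ‖meanM μ₁‖ ≤ m1 μ₁ := norm_integral_le_integral_norm _
  have hEn2 : ‖meanM μ₂‖ ≤ m1 μ₂ := norm_integral_le_integral_norm _
  have hF1 : ‖f μ₁‖ ≤ Mf * (1 + m1 μ₁) := hfg μ₁ hp₁ hi₁
  have hF2 : ‖f μ₂‖ ≤ Mf * (1 + m1 μ₂) := hfg μ₂ hp₂ hi₂
  -- uniform bounds on truncated pieces
  have hFb2 : h₂ * ‖f μ₂‖ ≤ M := by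
    by_cases c : m1 μ₂ ≤ R + 1
    · have hb : ‖f μ₂‖ ≤ M := le_trans hF2 (by rw [hMdef]; nlinarith)
      nlinarith [hh2.1, hh2.2, norm_nonneg (f μ₂)]
    · rw [hh2def, hη0 _ (le_of_not_ge c)]; simpa using hM0
  have hEb2 : h₂ * ‖meanM μ₂‖ ≤ R + 1 := by
    by_cases c : m1 μ₂ ≤ R + 1
    · nlinarith [hh2.1, hh2.2, norm_nonneg (meanM μ₂)]
    · rw [hh2def, hη0 _ (le_of_not_ge c)]; simp; linarith
  -- key estimate for the f-part
  have hCf : ‖h₁ • f μ₁ - h₂ • f μ₂‖ ≤ (L + 2 * M) * W := by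
    by_cases c₁ : m1 μ₁ ≤ R + 1
    · by_cases c₂ : m1 μ₂ ≤ R + 1
      · have hLf : ‖f μ₁ - f μ₂‖ ≤ L * W :=
          hfl μ₁ μ₂ π hp₁ hp₂ hi₁ hi₂ c₁ c₂ hpπ hmap1 hmap2
        have hid : h₁ • f μ₁ - h₂ • f μ₂ = h₁ • (f μ₁ - f μ₂) + (h₁ - h₂) • f μ₂ := by
          module
        rw [hid]
        have h1a : |h₁| ≤ 1 := abs_le.mpr ⟨by linarith [hh1.1], hh1.2⟩
        have hF2M : ‖f μ₂‖ ≤ M := le_trans hF2 (by rw [hMdef]; nlinarith)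
        calc ‖h₁ • (f μ₁ - f μ₂) + (h₁ - h₂) • f μ₂‖
            ≤ ‖h₁ • (f μ₁ - f μ₂)‖ + ‖(h₁ - h₂) • f μ₂‖ := norm_add_le _ _
          _ = |h₁| * ‖f μ₁ - f μ₂‖ + |h₁ - h₂| * ‖f μ₂‖ := by
              rw [norm_smul, norm_smul, Real.norm_eq_abs, Real.norm_eq_abs]
          _ ≤ 1 * (L * W) + (2 * W) * M :=
              add_le_add (mul_le_mul h1a hLf (norm_nonneg _) zero_le_one)
                (mul_le_mul hhd hF2M (norm_nonneg _) (by linarith))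
          _ = (L + 2 * M) * W := by ring
      · have hz : h₂ = 0 := hη0 _ (le_of_not_ge c₂)
        rw [hz, zero_smul, sub_zero, norm_smul, Real.norm_eq_abs]
        have hF1M : ‖f μ₁‖ ≤ M := le_trans hF1 (by rw [hMdef]; nlinarith)
        have h1W : |h₁| ≤ 2 * W := by
          rw [abs_of_nonneg hh1.1]
          calc h₁ = |h₁ - h₂| := by rw [hz, sub_zero, abs_of_nonneg hh1.1]
            _ ≤ 2 * W := hhd
        calc |h₁| * ‖f μ₁‖ ≤ (2 * W) * M :=
              mul_le_mul h1W hF1M (norm_nonneg _) (by linarith)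
          _ ≤ (L + 2 * M) * W := by nlinarith [mul_nonneg hL.le hW0]
    · have hz : h₁ = 0 := hη0 _ (le_of_not_ge c₁)
      rw [hz, zero_smul, zero_sub, norm_neg, norm_smul, Real.norm_eq_abs]
      by_cases c₂ : m1 μ₂ ≤ R + 1
      · have hF2M : ‖f μ₂‖ ≤ M := le_trans hF2 (by rw [hMdef]; nlinarith)
        have h2W : |h₂| ≤ 2 * W := by
          rw [abs_of_nonneg hh2.1]
          calc h₂ = |h₁ - h₂| := by rw [hz, zero_sub, abs_neg, abs_of_nonneg hh2.1]
            _ ≤ 2 * W := hhd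
        calc |h₂| * ‖f μ₂‖ ≤ (2 * W) * M :=
              mul_le_mul h2W hF2M (norm_nonneg _) (by linarith)
          _ ≤ (L + 2 * M) * W := by nlinarith [mul_nonneg hL.le hW0]
      · have hz2 : h₂ = 0 := hη0 _ (le_of_not_ge c₂)
        rw [hz2]; simp; positivity
  -- key estimate for the mean-part
  have hCe : ‖h₁ • meanM μ₁ - h₂ • meanM μ₂‖ ≤ (1 + 2 * (R + 1)) * W := by
    by_cases c₂ : m1 μ₂ ≤ R + 1
    · have hid : h₁ • meanM μ₁ - h₂ • meanM μ₂
          = h₁ • (meanM μ₁ - meanM μ₂) + (h₁ - h₂) • meanM μ₂ := by module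
      rw [hid]
      have h1a : |h₁| ≤ 1 := abs_le.mpr ⟨by linarith [hh1.1], hh1.2⟩
      have hE2R : ‖meanM μ₂‖ ≤ R + 1 := le_trans hEn2 c₂
      calc ‖h₁ • (meanM μ₁ - meanM μ₂) + (h₁ - h₂) • meanM μ₂‖
          ≤ ‖h₁ • (meanM μ₁ - meanM μ₂)‖ + ‖(h₁ - h₂) • meanM μ₂‖ := norm_add_le _ _
        _ = |h₁| * ‖meanM μ₁ - meanM μ₂‖ + |h₁ - h₂| * ‖meanM μ₂‖ := by
            rw [norm_smul, norm_smul, Real.norm_eq_abs, Real.norm_eq_abs]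
        _ ≤ 1 * W + (2 * W) * (R + 1) :=
            add_le_add (mul_le_mul h1a hEdiff (norm_nonneg _) zero_le_one)
              (mul_le_mul hhd hE2R (norm_nonneg _) (by linarith))
        _ = (1 + 2 * (R + 1)) * W := by ring
    · have hz : h₂ = 0 := hη0 _ (le_of_not_ge c₂)
      rw [hz, zero_smul, sub_zero, norm_smul, Real.norm_eq_abs]
      by_cases c₁ : m1 μ₁ ≤ R + 1
      · have h1W : |h₁| ≤ 2 * W := by
          rw [abs_of_nonneg hh1.1]
          calc h₁ = |h₁ - h₂| := by rw [hz, sub_zero, abs_of_nonneg hh1.1]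
            _ ≤ 2 * W := hhd
        have hE1R : ‖meanM μ₁‖ ≤ R + 1 := le_trans hEn1 c₁
        calc |h₁| * ‖meanM μ₁‖ ≤ (2 * W) * (R + 1) :=
              mul_le_mul h1W hE1R (norm_nonneg _) (by linarith)
          _ ≤ (1 + 2 * (R + 1)) * W := by nlinarith
      · have hz1 : h₁ = 0 := hη0 _ (le_of_not_ge c₁)
        rw [hz1]; simp; positivity
  -- assemble
  have hdecomp :
      (-x₁ + (l₁ * h₁) • f μ₁ + ((1 - l₁) * h₁) • meanM μ₁)
        - (-x₂ + (l₂ * h₂) • f μ₂ + ((1 - l₂) * h₂) • meanM μ₂)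
      = (x₂ - x₁) + (l₁ • (h₁ • f μ₁ - h₂ • f μ₂) + (l₁ - l₂) • (h₂ • f μ₂))
        + ((1 - l₁) • (h₁ • meanM μ₁ - h₂ • meanM μ₂) + (l₂ - l₁) • (h₂ • meanM μ₂)) := by
    module
  rw [hdecomp]
  have hl1a : |l₁| ≤ 1 := abs_le.mpr ⟨by linarith [hl₁.1], hl₁.2⟩
  have hl1b : |1 - l₁| ≤ 1 := abs_le.mpr ⟨by linarith [hl₁.2], by linarith [hl₁.1]⟩
  have t1 : ‖l₁ • (h₁ • f μ₁ - h₂ • f μ₂)‖ ≤ (L + 2 * M) * W := by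
    rw [norm_smul, Real.norm_eq_abs]
    calc |l₁| * ‖h₁ • f μ₁ - h₂ • f μ₂‖ ≤ 1 * ((L + 2 * M) * W) :=
          mul_le_mul hl1a hCf (norm_nonneg _) zero_le_one
      _ = (L + 2 * M) * W := one_mul _
  have t2 : ‖(l₁ - l₂) • (h₂ • f μ₂)‖ ≤ |l₁ - l₂| * M := by
    rw [norm_smul, Real.norm_eq_abs, norm_smul, Real.norm_eq_abs, abs_of_nonneg hh2.1]
    exact mul_le_mul_of_nonneg_left hFb2 (abs_nonneg _)
  have t3 : ‖(1 - l₁) • (h₁ • meanM μ₁ - h₂ • meanM μ₂)‖ ≤ (1 + 2 * (R + 1)) * W := by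
    rw [norm_smul, Real.norm_eq_abs]
    calc |1 - l₁| * ‖h₁ • meanM μ₁ - h₂ • meanM μ₂‖ ≤ 1 * ((1 + 2 * (R + 1)) * W) :=
          mul_le_mul hl1b hCe (norm_nonneg _) zero_le_one
      _ = (1 + 2 * (R + 1)) * W := one_mul _
  have t4 : ‖(l₂ - l₁) • (h₂ • meanM μ₂)‖ ≤ |l₁ - l₂| * (R + 1) := by
    rw [norm_smul, Real.norm_eq_abs, norm_smul, Real.norm_eq_abs, abs_of_nonneg hh2.1,
      abs_sub_comm]
    exact mul_le_mul_of_nonneg_left hEb2 (abs_nonneg _)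
  have hxx : ‖x₂ - x₁‖ = ‖x₁ - x₂‖ := norm_sub_rev _ _
  have hX0 : (0:ℝ) ≤ ‖x₁ - x₂‖ := norm_nonneg _
  have hA0 : (0:ℝ) ≤ |l₁ - l₂| := abs_nonneg _
  calc ‖(x₂ - x₁) + (l₁ • (h₁ • f μ₁ - h₂ • f μ₂) + (l₁ - l₂) • (h₂ • f μ₂))
        + ((1 - l₁) • (h₁ • meanM μ₁ - h₂ • meanM μ₂) + (l₂ - l₁) • (h₂ • meanM μ₂))‖
      ≤ ‖x₂ - x₁‖ + (‖l₁ • (h₁ • f μ₁ - h₂ • f μ₂)‖ + ‖(l₁ - l₂) • (h₂ • f μ₂)‖)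
        + (‖(1 - l₁) • (h₁ • meanM μ₁ - h₂ • meanM μ₂)‖ + ‖(l₂ - l₁) • (h₂ • meanM μ₂)‖) :=
        le_trans (norm_add_le _ _)
          (add_le_add (le_trans (norm_add_le _ _)
            (add_le_add le_rfl (norm_add_le _ _))) (norm_add_le _ _))
    _ ≤ ‖x₁ - x₂‖ + ((L + 2 * M) * W + |l₁ - l₂| * M)
        + ((1 + 2 * (R + 1)) * W + |l₁ - l₂| * (R + 1)) := by
        rw [hxx]; gcongr
    _ ≤ (2 + L + 3 * M + 3 * (R + 1)) * (‖x₁ - x₂‖ + |l₁ - l₂| + W) := by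
        nlinarith [mul_nonneg hL.le hX0, mul_nonneg hL.le hA0, mul_nonneg hL.le hW0,
          mul_nonneg hM0 hX0, mul_nonneg hM0 hA0, mul_nonneg hM0 hW0,
          mul_nonneg hR.le hX0, mul_nonneg hR.le hA0, mul_nonneg hR.le hW0]
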